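/- Jacobi's identity: the theta function Θ(τ) = Σ_{n∈ℤ} q^{n²} (with q = e^{2πiτ}) equals η(2τ)⁵ / (η(τ)² η(4τ)²), where η(τ) = q^{1/24} ∏_{n≥1} (1 - qⁿ). In particular Θ has no zeros on the upper half-plane. -/

import Mathlib

noncomputable section

open Complex Matrix CongruenceSubgroup

local notation "SL2Z" => Matrix.SpecialLinearGroup (Fin 2) ℤ

namespace RomikPaper

/-- The upper half-plane as a subset of `ℂ`. -/
def UHP : Set ℂ := {z : ℂ | 0 < z.im}

/-- The normalized derivative `D = (1/(2πi)) d/dτ = q d/dq`. -/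
def Dop (f : ℂ → ℂ) : ℂ → ℂ := fun τ => (2 * (Real.pi : ℂ) * Complex.I)⁻¹ * deriv f τ

/-- The Maass raising operator `∂_k = D - k/(4π Im τ)`. -/
def raise (k : ℚ) (f : ℂ → ℂ) : ℂ → ℂ :=
  fun τ => Dop f τ - (k : ℂ) / (4 * (Real.pi : ℂ) * (τ.im : ℂ)) * f τ

/-- The iterated raising operator `∂_k^n = ∂_{k+2(n-1)} ∘ ⋯ ∘ ∂_{k+2} ∘ ∂_k`. -/
def raiseIter (k : ℚ) : ℕ → (ℂ → ℂ) → (ℂ → ℂ)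
  | 0 => fun f => f
  | n + 1 => fun f => raise (k + 2 * n) (raiseIter k n f)

/-- `Y = -1/(4π Im τ)`. -/
def Yfun : ℂ → ℂ := fun τ => -1 / (4 * (Real.pi : ℂ) * (τ.im : ℂ))

/-- `q^n = e^{2πinτ}`. -/
def qexp (τ : ℂ) (n : ℕ) : ℂ := Complex.exp (2 * (Real.pi : ℂ) * Complex.I * (n : ℂ) * τ)

/-- The Jacobi theta function `Θ(τ) = Σ_{n ∈ ℤ} e^{2πin²τ}`. -/
def Θfun : ℂ → ℂ := fun τ => ∑' n : ℤ, Complex.exp (2 * (Real.pi : ℂ) * Complex.I * (n : ℂ) ^ 2 * τ)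

/-- The Dedekind eta function `η(τ) = q^{1/24} ∏_{n ≥ 1} (1 - qⁿ)`. -/
def ηfun : ℂ → ℂ := fun τ =>
  Complex.exp (2 * (Real.pi : ℂ) * Complex.I * τ / 24) *
    ∏' n : ℕ, (1 - Complex.exp (2 * (Real.pi : ℂ) * Complex.I * ((n : ℂ) + 1) * τ))

/-- `σ_k(n)`, the sum of `k`-th powers of the positive divisors of `n`. -/
def σfun (k n : ℕ) : ℕ := ∑ d ∈ Nat.divisors n, d ^ k

/-- The quasimodular Eisenstein series `E₂`. -/
def E2fun : ℂ → ℂ := fun τ => 1 - 24 * ∑' n : ℕ, (σfun 1 (n + 1) : ℂ) * qexp τ (n + 1)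

def E4fun : ℂ → ℂ := fun τ => 1 + 240 * ∑' n : ℕ, (σfun 3 (n + 1) : ℂ) * qexp τ (n + 1)

def E6fun : ℂ → ℂ := fun τ => 1 - 504 * ∑' n : ℕ, (σfun 5 (n + 1) : ℂ) * qexp τ (n + 1)

/-- The normalized Eisenstein series `E_k = 1 - (2k/B_k) Σ σ_{k-1}(n) qⁿ`. -/
def Efun (k : ℕ) : ℂ → ℂ := fun τ =>
  1 - ((2 * k / (bernoulli k) : ℚ) : ℂ) * ∑' n : ℕ, (σfun (k - 1) (n + 1) : ℂ) * qexp τ (n + 1)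

/-- The weight 2 form `F₂ = η(4τ)⁸/η(2τ)⁴ = Σ_{n odd} σ₁(n) qⁿ` on `Γ₀(4)`. -/
def F2fun : ℂ → ℂ := fun τ => ∑' n : ℕ, (if Odd n then (σfun 1 n : ℂ) else 0) * qexp τ n

/-- The extended Jacobi symbol `(c/d)` in the sense of Shimura (for `d` odd). -/
def shimuraSym (c d : ℤ) : ℤ :=
  if d < 0 ∧ c < 0 then -(jacobiSym c d.natAbs) else jacobiSym c d.natAbs

/-- `ε_d = 1` if `d ≡ 1 (mod 4)` and `ε_d = i` if `d ≡ 3 (mod 4)`. -/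
def epsd (d : ℤ) : ℂ := if d % 4 = 1 then 1 else Complex.I

/-- The Möbius action of `SL(2,ℤ)` on `ℂ`. -/
def mact (γ : SL2Z) (τ : ℂ) : ℂ :=
  (((γ : Matrix (Fin 2) (Fin 2) ℤ) 0 0 : ℂ) * τ + ((γ : Matrix (Fin 2) (Fin 2) ℤ) 0 1 : ℂ)) /
    (((γ : Matrix (Fin 2) (Fin 2) ℤ) 1 0 : ℂ) * τ + ((γ : Matrix (Fin 2) (Fin 2) ℤ) 1 1 : ℂ))

/-- The automorphy factor of weight `w ∈ ½ℤ`: `(cτ+d)^{-w}` for `w ∈ ℤ`, and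
`(c/d) ε_d^{-2w} (√(cτ+d))^{-2w}` for `w ∈ ½ + ℤ` (theta multiplier). -/
def jfac (w : ℚ) (γ : SL2Z) (τ : ℂ) : ℂ :=
  let c : ℤ := (γ : Matrix (Fin 2) (Fin 2) ℤ) 1 0
  let d : ℤ := (γ : Matrix (Fin 2) (Fin 2) ℤ) 1 1
  if w.den = 1 then ((c : ℂ) * τ + (d : ℂ)) ^ (-w.num)
  else (shimuraSym c d : ℂ) * epsd d ^ (-(2 * w).num) *
    (((c : ℂ) * τ + (d : ℂ)) ^ ((1 : ℂ) / 2)) ^ (-(2 * w).num)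

/-- The weight `w` slash action (with theta multiplier in half-integral weight). -/
def slash (w : ℚ) (γ : SL2Z) (f : ℂ → ℂ) : ℂ → ℂ := fun τ => jfac w γ τ * f (mact γ τ)

/-- Moderate growth on the upper half-plane (towards all cusps). -/
def ModerateGrowth (f : ℂ → ℂ) : Prop :=
  ∃ (C : ℝ) (r : ℕ), ∀ τ ∈ UHP, ‖f τ‖ ≤ C * (τ.im ^ r + (τ.im)⁻¹ ^ r)

/-- A holomorphic modular form of weight `w ∈ ½ℤ` on `Γ`. -/
def IsHoloMF (Γ : Subgroup SL2Z) (w : ℚ) (f : ℂ → ℂ) : Prop :=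
  DifferentiableOn ℂ f UHP ∧ ModerateGrowth f ∧
    ∀ γ ∈ Γ, ∀ τ ∈ UHP, slash w γ f τ = f τ

/-- `fj` is the family of associated functions exhibiting `f` as a quasimodular form of
weight `w` and depth `≤ d` on `Γ`:  `(f|_w γ)(τ) = Σ_{j=0}^{d} (c/(cτ+d))^j f_j(τ)`. -/
def QuasiTransform (Γ : Subgroup SL2Z) (w : ℚ) (d : ℕ) (f : ℂ → ℂ) (fj : ℕ → ℂ → ℂ) : Prop :=
  fj 0 = f ∧ (∀ j, DifferentiableOn ℂ (fj j) UHP ∧ ModerateGrowth (fj j)) ∧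
    (∀ j, j > d → fj j = 0) ∧
    ∀ γ ∈ Γ, ∀ τ ∈ UHP,
      slash w γ f τ = ∑ j ∈ Finset.range (d + 1),
        (((γ : Matrix (Fin 2) (Fin 2) ℤ) 1 0 : ℂ) /
          (((γ : Matrix (Fin 2) (Fin 2) ℤ) 1 0 : ℂ) * τ +
            ((γ : Matrix (Fin 2) (Fin 2) ℤ) 1 1 : ℂ))) ^ j * fj j τ

/-- A quasimodular form of weight `w` and depth `≤ d` on `Γ`. -/
def IsQuasiModular (Γ : Subgroup SL2Z) (w : ℚ) (d : ℕ) (f : ℂ → ℂ) : Prop :=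
  ∃ fj : ℕ → ℂ → ℂ, QuasiTransform Γ w d f fj

/-- `F` is an almost holomorphic modular form of weight `w` and degree `≤ d` with
coefficient functions `g`: `F = Σ_j g_j Y^j` with `Y = -1/(4π Im τ)`, transforming
like a modular form of weight `w` on `Γ`. -/
def IsAlmostHolo (Γ : Subgroup SL2Z) (w : ℚ) (d : ℕ) (F : ℂ → ℂ) (g : ℕ → ℂ → ℂ) : Prop :=
  (∀ j, DifferentiableOn ℂ (g j) UHP ∧ ModerateGrowth (g j)) ∧ (∀ j, j > d → g j = 0) ∧
    (∀ τ ∈ UHP, F τ = ∑ j ∈ Finset.range (d + 1), g j τ * Yfun τ ^ j) ∧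
    ∀ γ ∈ Γ, ∀ τ ∈ UHP, slash w γ F τ = F τ

end RomikPaper

namespace JacobiAux

open Complex Finset Filter Topology

variable {q : ℂ}

lemma one_add_ne_zero' {a : ℂ} (ha : ‖a‖ < 1) : 1 + a ≠ 0 := by
  intro h
  have : a = -1 := by linear_combination h
  rw [this] at ha; simp at ha

lemma summable_pow_succ (hq : ‖q‖ < 1) : Summable (fun n : ℕ => ‖q‖ ^ (n + 1)) := by
  have := (summable_geometric_of_lt_one (norm_nonneg q) hq).mul_left ‖q‖
  simpa [pow_succ, mul_comm] using this

lemma mult_ne_zero (hq : ‖q‖ < 1) {a : ℕ → ℂ} (ha : ∀ n, ‖a n‖ ≤ ‖q‖ ^ (n + 1)) :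
    Multipliable (fun n => 1 + a n) ∧ (∏' n, (1 + a n)) ≠ 0 := by
  have hne : ∀ n, 1 + a n ≠ 0 := fun n =>
    one_add_ne_zero' (lt_of_le_of_lt (ha n) (pow_lt_one₀ (norm_nonneg q) hq (Nat.succ_ne_zero n)))
  have hlog : Summable fun n => Complex.log (1 + a n) := by
    apply Summable.of_norm_bounded_eventually_nat (g := fun n => 3 / 2 * ‖q‖ ^ (n + 1))
      ((summable_pow_succ hq).mul_left _)
    have hev : ∀ᶠ n in atTop, ‖q‖ ^ (n + 1) ≤ 1 / 2 := by
      have h0 : Tendsto (fun n : ℕ => ‖q‖ ^ (n + 1)) atTop (𝓝 0) := by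
        exact (tendsto_pow_atTop_nhds_zero_of_lt_one (norm_nonneg q) hq).comp
          (tendsto_add_atTop_nat 1)
      exact (h0.eventually (eventually_le_nhds (by norm_num))).mono fun n h => h
    filter_upwards [hev] with n h
    calc ‖Complex.log (1 + a n)‖ ≤ 3 / 2 * ‖a n‖ :=
          norm_log_one_add_half_le_self (le_trans (ha n) h)
      _ ≤ 3 / 2 * ‖q‖ ^ (n + 1) := by nlinarith [ha n]
  constructor
  · exact Complex.multipliable_of_summable_log hlog
  · have := Complex.cexp_tsum_eq_tprod hne hlog
    rw [← this]
    exact Complex.exp_ne_zero _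

lemma mult_one_sub (hq : ‖q‖ < 1) (e : ℕ → ℕ) (he : ∀ n, n + 1 ≤ e n) :
    Multipliable (fun n => 1 - q ^ e n) ∧ (∏' n, (1 - q ^ e n)) ≠ 0 := by
  have ha : ∀ n, ‖-(q ^ e n)‖ ≤ ‖q‖ ^ (n + 1) := fun n => by
    rw [norm_neg, norm_pow]
    exact pow_le_pow_of_le_one (norm_nonneg q) hq.le (he n)
  simpa [sub_eq_add_neg] using mult_ne_zero hq ha

lemma mult_one_add (hq : ‖q‖ < 1) (e : ℕ → ℕ) (he : ∀ n, n + 1 ≤ e n) :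
    Multipliable (fun n => 1 + q ^ e n) ∧ (∏' n, (1 + q ^ e n)) ≠ 0 := by
  have ha : ∀ n, ‖q ^ e n‖ ≤ ‖q‖ ^ (n + 1) := fun n => by
    rw [norm_pow]
    exact pow_le_pow_of_le_one (norm_nonneg q) hq.le (he n)
  exact mult_ne_zero hq ha

lemma one_sub_pow_ne_zero (hq : ‖q‖ < 1) {k : ℕ} (hk : 1 ≤ k) : 1 - q ^ k ≠ 0 := by
  intro h
  have h1 : ‖q ^ k‖ < 1 := by
    rw [norm_pow]
    exact pow_lt_one₀ (norm_nonneg q) hq (by omega)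
  have : q ^ k = 1 := by linear_combination -h
  rw [this] at h1; simp at h1

lemma partial_lower {r : ℝ} (h0 : 0 ≤ r) (h1 : r < 1) :
    ∃ c : ℝ, 0 < c ∧ ∀ k, c ≤ ∏ t ∈ range k, (1 - r ^ (t + 1)) := by
  have hyr : ∀ t : ℕ, r ^ (t + 1) ≤ r := fun t =>
    pow_le_of_le_one h0 h1.le (Nat.succ_ne_zero t)
  have hrp : ∀ t : ℕ, 0 < 1 - r ^ (t + 1) := fun t => by
    have : r ^ (t+1) < 1 := pow_lt_one₀ h0 h1 (by omega); linarith
  set L : ℕ → ℝ := fun t => -Real.log (1 - r ^ (t + 1)) with hL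
  have hLnonneg : ∀ t, 0 ≤ L t := fun t => by
    have h2 : Real.log (1 - r ^ (t + 1)) ≤ 0 := by
      apply Real.log_nonpos
      · linarith [hrp t]
      · have := pow_nonneg h0 (t + 1); linarith
    simp only [hL]; linarith
  have hLle : ∀ t, L t ≤ (1 - r)⁻¹ * r ^ (t + 1) := by
    intro t
    have hpos := hrp t
    have h2 : Real.log (1 - r ^ (t + 1))⁻¹ ≤ (1 - r ^ (t + 1))⁻¹ - 1 :=
      Real.log_le_sub_one_of_pos (inv_pos.mpr hpos)
    rw [Real.log_inv] at h2
    have h3 : (1 - r ^ (t + 1))⁻¹ - 1 = r ^ (t + 1) / (1 - r ^ (t + 1)) := by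
      field_simp
      ring
    have h4 : r ^ (t + 1) / (1 - r ^ (t + 1)) ≤ r ^ (t + 1) / (1 - r) := by
      apply div_le_div_of_nonneg_left (pow_nonneg h0 _) (by linarith) (by linarith [hyr t])
    have h5 : r ^ (t + 1) / (1 - r) = (1 - r)⁻¹ * r ^ (t + 1) := div_eq_inv_mul _ _
    have h6 : r ^ (t + 1) / (1 - r ^ (t + 1)) = (1 - r ^ (t + 1))⁻¹ * r ^ (t + 1) :=
      div_eq_inv_mul _ _
    simp only [hL]
    linarith
  have hLsum : Summable L :=
    Summable.of_nonneg_of_le hLnonneg hLle (((summable_geometric_of_lt_one h0 h1).mul_left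
      ((1 - r)⁻¹ * r)).congr (fun t => by ring))
  refine ⟨Real.exp (-(∑' t, L t)), Real.exp_pos _, fun k => ?_⟩
  have hprod : ∏ t ∈ range k, (1 - r ^ (t + 1)) = Real.exp (-(∑ t ∈ range k, L t)) := by
    rw [← Finset.sum_neg_distrib, Real.exp_sum]
    exact Finset.prod_congr rfl fun t _ => by
      simp only [hL, neg_neg]; rw [Real.exp_log (hrp t)]
  rw [hprod]
  apply Real.exp_le_exp.mpr
  simp only [neg_le_neg_iff]
  exact hLsum.sum_le_tsum _ (fun t _ => hLnonneg t)

lemma partial_upper (hq : ‖q‖ < 1) (e : ℕ → ℕ) (he : ∀ n, n + 1 ≤ e n) (k : ℕ) :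
    ‖∏ t ∈ range k, (1 - q ^ e t)‖ ≤ Real.exp (∑' n : ℕ, ‖q‖ ^ (n + 1)) := by
  have h1 : ∀ t, ‖1 - q ^ e t‖ ≤ Real.exp (‖q‖ ^ (t + 1)) := by
    intro t
    calc ‖1 - q ^ e t‖ ≤ ‖(1:ℂ)‖ + ‖q ^ e t‖ := norm_sub_le _ _
      _ ≤ 1 + ‖q‖ ^ (t + 1) := by
          rw [norm_one, norm_pow]
          exact (add_le_add_iff_left 1).mpr (pow_le_pow_of_le_one (norm_nonneg q) hq.le (he t))
      _ ≤ Real.exp (‖q‖ ^ (t + 1)) := by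
          have := Real.add_one_le_exp (‖q‖ ^ (t + 1)); linarith
  calc ‖∏ t ∈ range k, (1 - q ^ e t)‖ ≤ ∏ t ∈ range k, ‖1 - q ^ e t‖ := norm_prod_le _ _
    _ ≤ ∏ t ∈ range k, Real.exp (‖q‖ ^ (t + 1)) :=
        Finset.prod_le_prod (fun t _ => norm_nonneg _) (fun t _ => h1 t)
    _ = Real.exp (∑ t ∈ range k, ‖q‖ ^ (t + 1)) := (Real.exp_sum _ _).symm
    _ ≤ Real.exp (∑' n : ℕ, ‖q‖ ^ (n + 1)) := by
        apply Real.exp_le_exp.mpr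
        exact (summable_pow_succ hq).sum_le_tsum _ (fun t _ => pow_nonneg (norm_nonneg q) _)

def fq (q : ℂ) (k : ℕ) : ℂ := ∏ t ∈ range k, (1 - q ^ (2 * (t + 1)))

def gb (q : ℂ) (n j : ℕ) : ℂ := if j ≤ n then fq q n / (fq q j * fq q (n - j)) else 0

lemma fq_zero : fq q 0 = 1 := by simp [fq]

lemma fq_succ (k : ℕ) : fq q (k + 1) = fq q k * (1 - q ^ (2 * (k + 1))) :=
  Finset.prod_range_succ _ _

lemma fq_ne_zero (hq : ‖q‖ < 1) (k : ℕ) : fq q k ≠ 0 :=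
  Finset.prod_ne_zero_iff.mpr fun t _ => one_sub_pow_ne_zero hq (by omega)

lemma gb_diag (hq : ‖q‖ < 1) (n : ℕ) : gb q n n = 1 := by
  simp [gb, fq_zero, fq_ne_zero hq n]

lemma gb_zero (hq : ‖q‖ < 1) (n : ℕ) : gb q n 0 = 1 := by
  simp [gb, fq_zero, fq_ne_zero hq n]

lemma exp_helper {t n : ℕ} (h : t + 1 ≤ n) :
    t * (t - 1) + 2 * n = (t + 1) * t + 2 * (n - t) := by
  cases t with
  | zero => omega
  | succ s =>
    have h' : s + 1 ≤ n := by omega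
    zify [h']
    push_cast [Nat.succ_sub_one]
    ring

lemma pascal (hq : ‖q‖ < 1) (n : ℕ) : ∀ j ≤ n + 1,
    gb q (n + 1) j * q ^ (j * (j - 1)) = gb q n j * q ^ (j * (j - 1)) +
      (if j = 0 then 0 else gb q n (j - 1) * q ^ ((j - 1) * (j - 2) + 2 * n)) := by
  intro j hj
  rcases Nat.eq_zero_or_pos j with rfl | hj1
  · simp [gb_zero hq]
  obtain ⟨t, rfl⟩ : ∃ t, j = t + 1 := ⟨j - 1, by omega⟩
  rw [if_neg (by omega)]
  simp only [Nat.add_sub_cancel, Nat.succ_sub_succ, Nat.sub_zero]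
  rcases Nat.lt_or_ge t n with htn | htn
  · -- 1 ≤ j = t+1 ≤ n
    have hAne : (1 - q ^ (2 * (t + 1))) ≠ 0 := one_sub_pow_ne_zero hq (by omega)
    have hBne : (1 - q ^ (2 * (n - t))) ≠ 0 := one_sub_pow_ne_zero hq (by omega)
    have e1 : fq q (n + 1) = fq q n * (1 - q ^ (2 * (n + 1))) := fq_succ n
    have e2 : fq q (t + 1) = fq q t * (1 - q ^ (2 * (t + 1))) := fq_succ t
    have e4 : fq q (n - t) = fq q (n - t - 1) * (1 - q ^ (2 * (n - t))) := by
      have h5 : n - t = (n - t - 1) + 1 := by omega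
      rw [h5]
      exact fq_succ _
    have p1 : q ^ (t * (t - 1) + 2 * n) = q ^ ((t + 1) * t) * q ^ (2 * (n - t)) := by
      rw [← pow_add, exp_helper (by omega : t + 1 ≤ n)]
    have p2 : q ^ (2 * (n + 1)) = q ^ (2 * (t + 1)) * q ^ (2 * (n - t)) := by
      rw [← pow_add]
      congr 1
      omega
    rw [gb, gb, gb, if_pos (by omega), if_pos (by omega), if_pos (by omega)]
    rw [show n + 1 - (t + 1) = n - t by omega, show n - (t + 1) = n - t - 1 by omega]
    rw [e1, e2, e4, p1, p2]
    field_simp [fq_ne_zero hq]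
    ring
  · -- j = n+1, t = n
    have htn' : t = n := by omega
    subst htn'
    rw [gb_diag hq, gb, if_neg (by omega), gb_diag hq]
    have : (t + 1) * t = t * (t - 1) + 2 * t := by
      cases t with
      | zero => rfl
      | succ s => push_cast [Nat.succ_sub_one]; ring
    rw [this]
    simp [pow_add]

theorem gbt (hq : ‖q‖ < 1) (w : ℂ) (n : ℕ) :
    ∏ k ∈ range n, (1 + w * q ^ (2 * k)) =
      ∑ j ∈ range (n + 1), gb q n j * q ^ (j * (j - 1)) * w ^ j := by
  induction n with
  | zero => simp [gb_zero hq]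
  | succ n ih =>
    rw [Finset.prod_range_succ, ih, mul_add, mul_one]
    have key : ∀ j ∈ range (n + 2), gb q (n + 1) j * q ^ (j * (j - 1)) * w ^ j =
        gb q n j * q ^ (j * (j - 1)) * w ^ j +
        (if j = 0 then 0 else gb q n (j - 1) * q ^ ((j - 1) * (j - 2) + 2 * n)) * w ^ j := by
      intro j hj
      have := pascal hq n j (by simp at hj; omega)
      rw [← add_mul, ← this]
    rw [Finset.sum_congr rfl key, Finset.sum_add_distrib]
    congr 1
    · -- first piece: drop the j = n+1 term which is zero
      rw [Finset.sum_range_succ (fun j => gb q n j * q ^ (j * (j - 1)) * w ^ j) (n + 1)]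
      have : gb q n (n + 1) = 0 := by rw [gb, if_neg (by omega)]
      simp [this]
    · -- second piece: reindex
      rw [Finset.sum_range_succ' (fun j => (if j = 0 then (0:ℂ) else
            gb q n (j - 1) * q ^ ((j - 1) * (j - 2) + 2 * n)) * w ^ j) (n + 1)]
      simp only [if_neg (Nat.succ_ne_zero _), Nat.add_sub_cancel, Nat.succ_sub_succ,
        Nat.sub_zero, eq_self_iff_true, if_true, zero_mul, add_zero]
      rw [Finset.sum_mul]
      apply Finset.sum_congr rfl
      intro i _
      rw [pow_add, pow_succ]
      ring
lemma odd_sum (m : ℕ) : ∑ k ∈ range m, (2 * k + 1) = m ^ 2 := by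
  induction m with
  | zero => simp
  | succ n ih => rw [Finset.sum_range_succ, ih]; ring

lemma sfi_exp {m j : ℕ} (hm : 1 ≤ m) :
    m ^ 2 + j * (j - 1) = ((j : ℤ) - m).natAbs ^ 2 + (2 * m - 1) * j := by
  have h2 : (1 : ℕ) ≤ 2 * m := by omega
  cases j with
  | zero => zify [h2]; rw [_root_.sq_abs]; ring
  | succ s => rw [Nat.succ_sub_one]; zify [h2]; rw [_root_.sq_abs]; ring

theorem sfi (hq : ‖q‖ < 1) (hq0 : q ≠ 0) (m : ℕ) :
    (∏ t ∈ range m, (1 + q ^ (2 * t + 1))) ^ 2 =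
      ∑ i ∈ Finset.Icc (-(m : ℤ)) m, gb q (2 * m) ((m : ℤ) + i).toNat * q ^ i.natAbs ^ 2 := by
  rcases Nat.eq_zero_or_pos m with rfl | hm
  · simp [gb_zero hq]
  set w : ℂ := (q ^ (2 * m - 1))⁻¹ with hw
  have hwne : q ^ (2 * m - 1) ≠ 0 := pow_ne_zero _ hq0
  -- Step A
  have stepA : q ^ m ^ 2 * ∏ k ∈ range (2 * m), (1 + w * q ^ (2 * k)) =
      (∏ t ∈ range m, (1 + q ^ (2 * t + 1))) ^ 2 := by
    rw [show 2 * m = m + m by ring, Finset.prod_range_add]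
    have hsecond : ∀ k, 1 + w * q ^ (2 * (m + k)) = 1 + q ^ (2 * k + 1) := by
      intro k
      congr 1
      rw [hw, inv_mul_eq_iff_eq_mul₀ hwne, ← pow_add]
      congr 1
      omega
    have hfirst : q ^ m ^ 2 * ∏ k ∈ range m, (1 + w * q ^ (2 * k)) =
        ∏ t ∈ range m, (1 + q ^ (2 * t + 1)) := by
      rw [← Finset.prod_range_reflect (fun k => 1 + w * q ^ (2 * k)) m]
      rw [← odd_sum m, ← Finset.prod_pow_eq_pow_sum, ← Finset.prod_mul_distrib]
      apply Finset.prod_congr rfl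
      intro k hk
      have hkm : k < m := Finset.mem_range.mp hk
      have h7 : q ^ (2 * k + 1) * q ^ (2 * (m - 1 - k)) = q ^ (2 * m - 1) := by
        rw [← pow_add]; congr 1; omega
      rw [hw, mul_add, mul_one,
        show q ^ (2 * k + 1) * ((q ^ (2 * m - 1))⁻¹ * q ^ (2 * (m - 1 - k))) =
          (q ^ (2 * m - 1))⁻¹ * (q ^ (2 * k + 1) * q ^ (2 * (m - 1 - k))) by ring,
        h7, inv_mul_cancel₀ hwne]
      ring
    calc q ^ m ^ 2 * ((∏ k ∈ range m, (1 + w * q ^ (2 * k))) *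
          ∏ k ∈ range m, (1 + w * q ^ (2 * (m + k))))
        = (q ^ m ^ 2 * ∏ k ∈ range m, (1 + w * q ^ (2 * k))) *
          ∏ k ∈ range m, (1 + w * q ^ (2 * (m + k))) := by ring
      _ = (∏ t ∈ range m, (1 + q ^ (2 * t + 1))) *
          ∏ t ∈ range m, (1 + q ^ (2 * t + 1)) := by
          rw [hfirst]
          congr 1
          exact Finset.prod_congr rfl fun k _ => hsecond k
      _ = (∏ t ∈ range m, (1 + q ^ (2 * t + 1))) ^ 2 := (sq _).symm
  -- Step B
  have stepB : q ^ m ^ 2 * ∑ j ∈ range (2 * m + 1), gb q (2 * m) j * q ^ (j * (j - 1)) * w ^ j =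
      ∑ j ∈ range (2 * m + 1), gb q (2 * m) j * q ^ (((j : ℤ) - m).natAbs ^ 2) := by
    rw [Finset.mul_sum]
    apply Finset.sum_congr rfl
    intro j _
    rw [hw, inv_pow, ← pow_mul]
    have h8 : q ^ m ^ 2 * q ^ (j * (j - 1)) = q ^ (((j : ℤ) - m).natAbs ^ 2) *
        q ^ ((2 * m - 1) * j) := by
      rw [← pow_add, ← pow_add, sfi_exp hm]
    calc q ^ m ^ 2 * (gb q (2 * m) j * q ^ (j * (j - 1)) * (q ^ ((2 * m - 1) * j))⁻¹)
        = gb q (2 * m) j * (q ^ m ^ 2 * q ^ (j * (j - 1))) * (q ^ ((2 * m - 1) * j))⁻¹ := by ring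
      _ = gb q (2 * m) j * (q ^ (((j : ℤ) - m).natAbs ^ 2) * q ^ ((2 * m - 1) * j)) *
          (q ^ ((2 * m - 1) * j))⁻¹ := by rw [h8]
      _ = gb q (2 * m) j * q ^ (((j : ℤ) - m).natAbs ^ 2) := by
          rw [show gb q (2 * m) j * (q ^ (((j : ℤ) - m).natAbs ^ 2) * q ^ ((2 * m - 1) * j)) *
              (q ^ ((2 * m - 1) * j))⁻¹ = gb q (2 * m) j * q ^ (((j : ℤ) - m).natAbs ^ 2) *
              (q ^ ((2 * m - 1) * j) * (q ^ ((2 * m - 1) * j))⁻¹) by ring,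
            mul_inv_cancel₀ (pow_ne_zero _ hq0), mul_one]
  -- combine with GBT and reindex
  rw [← stepA, gbt hq w (2 * m), stepB]
  apply Finset.sum_bij' (fun (j : ℕ) (_ : j ∈ range (2 * m + 1)) => (j : ℤ) - m)
    (fun (i : ℤ) (_ : i ∈ Finset.Icc (-(m : ℤ)) m) => ((m : ℤ) + i).toNat)
  · intro j hj
    simp only [Finset.mem_range] at hj
    simp only [Finset.mem_Icc]
    omega
  · intro i hi
    simp only [Finset.mem_Icc] at hi
    simp only [Finset.mem_range]
    omega
  · intro j hj
    simp only [Finset.mem_range] at hj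
    omega
  · intro i hi
    simp only [Finset.mem_Icc] at hi
    omega
  · intro j hj
    congr 2
    omega
lemma norm_fq_lower (hq : ‖q‖ < 1) :
    ∃ c : ℝ, 0 < c ∧ ∀ k, c ≤ ‖fq q k‖ := by
  obtain ⟨c, hc, hcle⟩ := partial_lower (mul_self_nonneg ‖q‖ |>.trans_eq (sq ‖q‖).symm |> fun _ =>
    sq_nonneg ‖q‖) (by nlinarith [norm_nonneg q] : ‖q‖ ^ 2 < 1)
  refine ⟨c, hc, fun k => ?_⟩
  calc c ≤ ∏ t ∈ range k, (1 - (‖q‖ ^ 2) ^ (t + 1)) := hcle k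
    _ ≤ ∏ t ∈ range k, ‖1 - q ^ (2 * (t + 1))‖ := by
        apply Finset.prod_le_prod
        · intro t _
          have : (‖q‖ ^ 2) ^ (t + 1) < 1 :=
            pow_lt_one₀ (sq_nonneg _) (by nlinarith [norm_nonneg q]) (Nat.succ_ne_zero t)
          linarith
        · intro t _
          have h1 : ‖q ^ (2 * (t + 1))‖ = (‖q‖ ^ 2) ^ (t + 1) := by
            rw [norm_pow, ← pow_mul]
          calc 1 - (‖q‖ ^ 2) ^ (t + 1) = ‖(1:ℂ)‖ - ‖q ^ (2 * (t + 1))‖ := by rw [norm_one, h1]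
            _ ≤ ‖1 - q ^ (2 * (t + 1))‖ := norm_sub_norm_le _ _
    _ = ‖fq q k‖ := by rw [fq, norm_prod]

lemma gb_bound (hq : ‖q‖ < 1) :
    ∃ M : ℝ, 0 < M ∧ ∀ n j, ‖gb q n j‖ ≤ M := by
  obtain ⟨c, hc, hlow⟩ := norm_fq_lower hq
  set Sq := ∑' n : ℕ, ‖q‖ ^ (n + 1)
  refine ⟨Real.exp Sq / (c * c), by positivity, fun n j => ?_⟩
  rw [gb]
  split_ifs with h
  · rw [norm_div, norm_mul]
    apply div_le_div₀ (by positivity)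
    · exact partial_upper hq _ (fun t => by omega) n
    · positivity
    · exact mul_le_mul (hlow j) (hlow (n - j)) hc.le (le_trans hc.le (hlow j))
  · simp only [norm_zero]
    positivity

lemma summable_bound (hq : ‖q‖ < 1) (M : ℝ) :
    Summable (fun i : ℤ => M * ‖q‖ ^ i.natAbs) := by
  apply Summable.mul_left
  apply Summable.of_nat_of_neg
  · apply (summable_geometric_of_lt_one (norm_nonneg q) hq).congr
    intro n
    simp [Int.natAbs_natCast]
  · apply (summable_geometric_of_lt_one (norm_nonneg q) hq).congr
    intro n
    simp [Int.natAbs_neg, Int.natAbs_natCast]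

theorem theta_prod (hq : ‖q‖ < 1) (hq0 : q ≠ 0) :
    ∑' i : ℤ, q ^ i.natAbs ^ 2 =
      (∏' n : ℕ, (1 - q ^ (2 * (n + 1)))) * (∏' n : ℕ, (1 + q ^ (2 * n + 1))) ^ 2 := by
  obtain ⟨hE2m, hE2ne⟩ := mult_one_sub hq (fun n => 2 * (n + 1))
    (fun n => by show n + 1 ≤ 2 * (n + 1); omega)
  obtain ⟨hAm, hAne⟩ := mult_one_add hq (fun n => 2 * n + 1)
    (fun n => by show n + 1 ≤ 2 * n + 1; omega)
  set E2 := ∏' n : ℕ, (1 - q ^ (2 * (n + 1))) with hE2def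
  set A := ∏' n : ℕ, (1 + q ^ (2 * n + 1)) with hAdef
  set F : ℕ → ℤ → ℂ := fun m i =>
    if i.natAbs ≤ m then gb q (2 * m) ((m : ℤ) + i).toNat * q ^ i.natAbs ^ 2 else 0 with hF
  -- each SFI sum is a tsum of F m
  have hsum_eq : ∀ m : ℕ, (∏ t ∈ range m, (1 + q ^ (2 * t + 1))) ^ 2 = ∑' i : ℤ, F m i := by
    intro m
    rw [sfi hq hq0 m]
    rw [tsum_eq_sum (s := Finset.Icc (-(m : ℤ)) m) (fun i hi => by
      simp only [hF]
      simp only [Finset.mem_Icc] at hi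
      exact if_neg (by omega))]
    apply Finset.sum_congr rfl
    intro i hi
    simp only [Finset.mem_Icc] at hi
    simp only [hF]
    exact (if_pos (by omega)).symm
  -- tendsto of the partial product side
  have hfq_tendsto : Tendsto (fq q) atTop (𝓝 E2) := by
    unfold fq
    exact hE2m.hasProd.tendsto_prod_nat
  have hLHS : Tendsto (fun m => (∏ t ∈ range m, (1 + q ^ (2 * t + 1))) ^ 2) atTop (𝓝 (A ^ 2)) :=
    hAm.hasProd.tendsto_prod_nat.pow 2
  -- dominated convergence for the sum side
  obtain ⟨M, hM, hgb⟩ := gb_bound hq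
  have hRHS : Tendsto (fun m => ∑' i : ℤ, F m i) atTop
      (𝓝 (∑' i : ℤ, q ^ i.natAbs ^ 2 * E2⁻¹)) := by
    apply tendsto_tsum_of_dominated_convergence (summable_bound hq M)
    · intro i
      have hm2 : Tendsto (fun m : ℕ => 2 * m) atTop atTop :=
        Filter.tendsto_atTop_atTop.mpr fun b => ⟨b, fun n hn => by omega⟩
      have hmp : Tendsto (fun m : ℕ => ((m : ℤ) + i).toNat) atTop atTop :=
        Filter.tendsto_atTop_atTop.mpr fun b => ⟨b + i.natAbs, fun n hn => by omega⟩
      have hmm : Tendsto (fun m : ℕ => ((m : ℤ) - i).toNat) atTop atTop :=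
        Filter.tendsto_atTop_atTop.mpr fun b => ⟨b + i.natAbs, fun n hn => by omega⟩
      have key : Tendsto (fun m : ℕ =>
          fq q (2 * m) / (fq q ((m : ℤ) + i).toNat * fq q ((m : ℤ) - i).toNat)
            * q ^ i.natAbs ^ 2) atTop (𝓝 (E2 / (E2 * E2) * q ^ i.natAbs ^ 2)) := by
        exact (Tendsto.div (hfq_tendsto.comp hm2)
          ((hfq_tendsto.comp hmp).mul (hfq_tendsto.comp hmm))
          (mul_ne_zero hE2ne hE2ne)).mul_const _
      have heq : ∀ᶠ m in (atTop : Filter ℕ), (fun m : ℕ =>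
          fq q (2 * m) / (fq q ((m : ℤ) + i).toNat * fq q ((m : ℤ) - i).toNat)
            * q ^ i.natAbs ^ 2) m = F m i := by
        filter_upwards [eventually_ge_atTop i.natAbs] with m hm
        simp only [hF]
        have hj1 : ((m : ℤ) + i).toNat ≤ 2 * m := by omega
        have hidx : 2 * m - ((m : ℤ) + i).toNat = ((m : ℤ) - i).toNat := by omega
        rw [if_pos hm, gb, if_pos hj1, hidx]
      have hval : E2 / (E2 * E2) * q ^ i.natAbs ^ 2 = q ^ i.natAbs ^ 2 * E2⁻¹ := by
        field_simp
      rw [← hval]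
      exact key.congr' heq
    · apply Filter.Eventually.of_forall
      intro m i
      simp only [hF]
      split_ifs with h
      · rw [norm_mul, norm_pow]
        have h1 : ‖q‖ ^ i.natAbs ^ 2 ≤ ‖q‖ ^ i.natAbs :=
          pow_le_pow_of_le_one (norm_nonneg q) hq.le (Nat.le_self_pow (by norm_num) _)
        exact mul_le_mul (hgb _ _) h1 (by positivity) hM.le
      · rw [norm_zero]
        exact mul_nonneg hM.le (pow_nonneg (norm_nonneg q) _)
  -- identify the limits
  have hunique : A ^ 2 = ∑' i : ℤ, q ^ i.natAbs ^ 2 * E2⁻¹ := by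
    apply tendsto_nhds_unique _ hRHS
    exact hLHS.congr (fun m => hsum_eq m)
  rw [tsum_mul_right] at hunique
  have : (∑' i : ℤ, q ^ i.natAbs ^ 2) = A ^ 2 * E2 := by
    rw [hunique]
    field_simp
  rw [this]
  ring
theorem qside (hq : ‖q‖ < 1) (hq0 : q ≠ 0) :
    (∑' i : ℤ, q ^ i.natAbs ^ 2) =
      (∏' n : ℕ, (1 - q ^ (2 * (n + 1)))) ^ 5 /
        ((∏' n : ℕ, (1 - q ^ (n + 1))) ^ 2 * (∏' n : ℕ, (1 - q ^ (4 * (n + 1)))) ^ 2) ∧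
      (∑' i : ℤ, q ^ i.natAbs ^ 2) ≠ 0 := by
  obtain ⟨hEqm, hEqne⟩ := mult_one_sub hq (fun n => n + 1) (fun n => le_refl _)
  obtain ⟨hE2m, hE2ne⟩ := mult_one_sub hq (fun n => 2 * (n + 1))
    (fun n => by show n + 1 ≤ 2 * (n + 1); omega)
  obtain ⟨hE4m, hE4ne⟩ := mult_one_sub hq (fun n => 4 * (n + 1))
    (fun n => by show n + 1 ≤ 4 * (n + 1); omega)
  obtain ⟨hAm, hAne⟩ := mult_one_add hq (fun n => 2 * n + 1)
    (fun n => by show n + 1 ≤ 2 * n + 1; omega)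
  obtain ⟨hBm, hBne⟩ := mult_one_sub hq (fun n => 2 * n + 1)
    (fun n => by show n + 1 ≤ 2 * n + 1; omega)
  obtain ⟨hCm, hCne⟩ := mult_one_sub hq (fun n => 4 * n + 2)
    (fun n => by show n + 1 ≤ 4 * n + 2; omega)
  set Eq1 := ∏' n : ℕ, (1 - q ^ (n + 1)) with hEq1
  set E2 := ∏' n : ℕ, (1 - q ^ (2 * (n + 1))) with hE2
  set E4 := ∏' n : ℕ, (1 - q ^ (4 * (n + 1))) with hE4
  set A := ∏' n : ℕ, (1 + q ^ (2 * n + 1)) with hA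
  set B := ∏' n : ℕ, (1 - q ^ (2 * n + 1)) with hB
  set C := ∏' n : ℕ, (1 - q ^ (4 * n + 2)) with hC
  -- split 1 : B * E2 = Eq1
  have split1 : B * E2 = Eq1 := by
    have heq2 : (∏' k : ℕ, (1 - q ^ (2 * (k + 1)))) = ∏' k : ℕ, (1 - q ^ (2 * k + 1 + 1)) :=
      tprod_congr fun k => by rw [show 2 * (k + 1) = 2 * k + 1 + 1 by ring]
    rw [hB, hE2, hEq1, heq2]
    exact tprod_even_mul_odd (f := fun n => 1 - q ^ (n + 1))
      (hBm.congr (fun k => by norm_num))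
      (hE2m.congr (fun k => by rw [show 2 * (k + 1) = 2 * k + 1 + 1 by ring]))
  -- split 2 : C * E4 = E2
  have split2 : C * E4 = E2 := by
    have e1 : (∏' k : ℕ, (1 - q ^ (4 * k + 2))) = ∏' k : ℕ, (1 - q ^ (2 * (2 * k + 1))) :=
      tprod_congr fun k => by rw [show 2 * (2 * k + 1) = 4 * k + 2 by ring]
    have e2 : (∏' k : ℕ, (1 - q ^ (4 * (k + 1)))) = ∏' k : ℕ, (1 - q ^ (2 * (2 * k + 1 + 1))) :=
      tprod_congr fun k => by rw [show 2 * (2 * k + 1 + 1) = 4 * (k + 1) by ring]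
    rw [hC, hE4, hE2, e1, e2]
    exact tprod_even_mul_odd (f := fun n => 1 - q ^ (2 * (n + 1)))
      (hCm.congr (fun k => by rw [show 4 * k + 2 = 2 * (2 * k + 1) by ring]))
      (hE4m.congr (fun k => by rw [show 4 * (k + 1) = 2 * (2 * k + 1 + 1) by ring]))
  -- split 3 : A * B = C
  have split3 : A * B = C := by
    rw [hA, hB, hC, ← Multipliable.tprod_mul hAm hBm]
    exact tprod_congr fun n => by
      have h9 : q ^ (2 * n + 1) * q ^ (2 * n + 1) = q ^ (4 * n + 2) := by
        rw [← pow_add]; congr 1; ring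
      linear_combination -h9
  have hth : (∑' i : ℤ, q ^ i.natAbs ^ 2) = E2 * A ^ 2 := theta_prod hq hq0
  have hkey : A * Eq1 * E4 = E2 ^ 2 := by
    calc A * Eq1 * E4 = A * (B * E2) * E4 := by rw [split1]
      _ = C * E4 * E2 := by rw [← split3]; ring
      _ = E2 ^ 2 := by rw [split2]; ring
  have hmain : (∑' i : ℤ, q ^ i.natAbs ^ 2) * (Eq1 ^ 2 * E4 ^ 2) = E2 ^ 5 := by
    calc (∑' i : ℤ, q ^ i.natAbs ^ 2) * (Eq1 ^ 2 * E4 ^ 2)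
        = E2 * (A * Eq1 * E4) ^ 2 := by rw [hth]; ring
      _ = E2 * (E2 ^ 2) ^ 2 := by rw [hkey]
      _ = E2 ^ 5 := by ring
  constructor
  · rw [eq_div_iff (mul_ne_zero (pow_ne_zero _ hEqne) (pow_ne_zero _ hE4ne))]
    exact hmain
  · rw [hth]
    exact mul_ne_zero hE2ne (pow_ne_zero _ hAne)
end JacobiAux

namespace RomikPaper

open Complex JacobiAux

/-- Jacobi's identity `Θ(τ) = η(2τ)⁵/(η(τ)² η(4τ)²)`; in particular `Θ` has no zeros on
the upper half-plane. -/
theorem jacobi_identity :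
    ∀ τ ∈ UHP, Θfun τ = ηfun (2 * τ) ^ 5 / (ηfun τ ^ 2 * ηfun (4 * τ) ^ 2) ∧ Θfun τ ≠ 0 := by
  intro τ hτ
  have him : 0 < τ.im := hτ
  set q : ℂ := Complex.exp (2 * (Real.pi : ℂ) * Complex.I * τ) with hqdef
  have hq0 : q ≠ 0 := Complex.exp_ne_zero _
  have hre : (2 * (Real.pi : ℂ) * Complex.I * τ).re = -(2 * Real.pi * τ.im) := by
    simp [Complex.mul_re, Complex.mul_im]
    try ring
  have hq : ‖q‖ < 1 := by
    rw [hqdef, Complex.norm_exp, hre]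
    apply Real.exp_lt_one_iff.mpr
    have := Real.pi_pos
    nlinarith
  have hθ : Θfun τ = ∑' i : ℤ, q ^ i.natAbs ^ 2 := by
    unfold Θfun
    apply tsum_congr
    intro n
    have h1 : ((n.natAbs ^ 2 : ℕ) : ℤ) = n ^ 2 := by
      rw [Nat.cast_pow, Int.natAbs_sq]
    have hcast : ((n.natAbs ^ 2 : ℕ) : ℂ) = (n : ℂ) ^ 2 := by
      rw [show ((n.natAbs ^ 2 : ℕ) : ℂ) = (((n.natAbs ^ 2 : ℕ) : ℤ) : ℂ) by rw [Int.cast_natCast], h1]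
      push_cast
      ring
    rw [hqdef, ← Complex.exp_nat_mul]
    congr 1
    rw [hcast]
    ring
  have hη1 : ηfun τ = Complex.exp (2 * (Real.pi : ℂ) * Complex.I * τ / 24) *
      ∏' n : ℕ, (1 - q ^ (n + 1)) := by
    unfold ηfun
    congr 1
    apply tprod_congr
    intro n
    rw [hqdef, ← Complex.exp_nat_mul]
    congr 2
    push_cast
    ring
  have hη2 : ηfun (2 * τ) = Complex.exp (2 * (Real.pi : ℂ) * Complex.I * (2 * τ) / 24) *
      ∏' n : ℕ, (1 - q ^ (2 * (n + 1))) := by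
    unfold ηfun
    congr 1
    apply tprod_congr
    intro n
    rw [hqdef, ← Complex.exp_nat_mul]
    congr 2
    push_cast
    ring
  have hη4 : ηfun (4 * τ) = Complex.exp (2 * (Real.pi : ℂ) * Complex.I * (4 * τ) / 24) *
      ∏' n : ℕ, (1 - q ^ (4 * (n + 1))) := by
    unfold ηfun
    congr 1
    apply tprod_congr
    intro n
    rw [hqdef, ← Complex.exp_nat_mul]
    congr 2
    push_cast
    ring
  obtain ⟨hqs, hne⟩ := JacobiAux.qside hq hq0
  obtain ⟨-, hEqne⟩ := JacobiAux.mult_one_sub hq (fun n => n + 1) (fun n => le_refl _)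
  obtain ⟨-, hE4ne⟩ := JacobiAux.mult_one_sub hq (fun n => 4 * (n + 1))
    (fun n => by show n + 1 ≤ 4 * (n + 1); omega)
  constructor
  · rw [hθ, hqs, hη1, hη2, hη4]
    set c1 := Complex.exp (2 * (Real.pi : ℂ) * Complex.I * τ / 24) with hc1
    set c2 := Complex.exp (2 * (Real.pi : ℂ) * Complex.I * (2 * τ) / 24) with hc2
    set c4 := Complex.exp (2 * (Real.pi : ℂ) * Complex.I * (4 * τ) / 24) with hc4
    have hc : c2 ^ 5 = c1 ^ 2 * c4 ^ 2 := by
      rw [hc1, hc2, hc4, ← Complex.exp_nat_mul, ← Complex.exp_nat_mul, ← Complex.exp_nat_mul,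
        ← Complex.exp_add]
      congr 1
      push_cast
      ring
    rw [mul_pow, mul_pow, mul_pow, hc]
    rw [show c1 ^ 2 * (∏' n : ℕ, (1 - q ^ (n + 1))) ^ 2 *
        (c4 ^ 2 * (∏' n : ℕ, (1 - q ^ (4 * (n + 1)))) ^ 2) =
        (c1 ^ 2 * c4 ^ 2) * ((∏' n : ℕ, (1 - q ^ (n + 1))) ^ 2 *
          (∏' n : ℕ, (1 - q ^ (4 * (n + 1)))) ^ 2) by ring,
      show c1 ^ 2 * c4 ^ 2 * (∏' n : ℕ, (1 - q ^ (2 * (n + 1)))) ^ 5 =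
        (c1 ^ 2 * c4 ^ 2) * (∏' n : ℕ, (1 - q ^ (2 * (n + 1)))) ^ 5 by ring,
      mul_div_mul_left _ _ (mul_ne_zero (pow_ne_zero _ (Complex.exp_ne_zero _))
        (pow_ne_zero _ (Complex.exp_ne_zero _)))]
  · rw [hθ]
    exact hne

end RomikPaper
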